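/- arXiv:2012.04942 — 2 statements merged into one kernel-verified Lean document; each statement's English description precedes it below -/
import Mathlib

section
/- Let {f_t : t ∈ T} ⊂ Γ₀(X) be a nonempty family, f := sup_{t∈T} f_t, and suppose x is a global minimizer of f with x ∈ dom f. Assume the standard hypothesis (SH) holds and let 0 < ρ_t ≤ 1, t ∈ T, satisfy inf_{t∈T} ρ_t f_t(x) > −∞. Then ∂f(x) = ⋂_{ε>0} co‾( (⋃_{t∈T(x)} ∂_ε f_t(x)) ∪ (⋃_{t∈T\T(x)} ε·∂_ε(ρ_t f_t)(x)) ), where (ρ_t f_t)(z) := ρ_t f_t(z) and ε·S := {ε s : s ∈ S}. -/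
open Set Pointwise Topology
open scoped Classical

noncomputable section

variable {X : Type*} [AddCommGroup X] [Module ℝ X] [TopologicalSpace X]
  [IsTopologicalAddGroup X] [ContinuousSMul ℝ X] [LocallyConvexSpace ℝ X] [T2Space X]

/-- Convexity for extended-real-valued functions. -/
def EConvexOn' (f : X → EReal) : Prop :=
  ∀ x y : X, ∀ a b : ℝ, 0 ≤ a → 0 ≤ b → a + b = 1 →
    f (a • x + b • y) ≤ (a : EReal) * f x + (b : EReal) * f y

/-- `f ∈ Γ₀(X)`: proper, convex and lower semicontinuous. -/
def Gamma0 (f : X → EReal) : Prop :=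
  (∀ x, f x ≠ ⊥) ∧ (∃ x, f x ≠ ⊤) ∧ EConvexOn' f ∧ LowerSemicontinuous f

/-- Effective domain of `f`. -/
def edom (f : X → EReal) : Set X := {x | f x ≠ ⊤}

/-- The ε-subdifferential of `f` at `x` (a subset of the weak* dual);
it is empty when `ε < 0` or `f x ∉ ℝ`. -/
def esubdiff (f : X → EReal) (x : X) (ε : ℝ) : Set (WeakDual ℝ X) :=
  {p | 0 ≤ ε ∧ f x ≠ ⊤ ∧ f x ≠ ⊥ ∧
    ∀ y : X, f x + ((p y - p x - ε : ℝ) : EReal) ≤ f y}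

/-- Normal cone to `A` at `x` (empty when `x ∉ A`). -/
def normalCone (A : Set X) (x : X) : Set (WeakDual ℝ X) :=
  {p | x ∈ A ∧ ∀ y ∈ A, p y - p x ≤ 0}

/-- Recession cone of a set. -/
def recCone {V : Type*} [AddCommMonoid V] [Module ℝ V] (C : Set V) : Set V :=
  {y | ∃ c ∈ C, ∀ l : ℝ, 0 ≤ l → c + l • y ∈ C}

/-- Closed convex hull of a set. -/
def cclo {V : Type*} [AddCommMonoid V] [Module ℝ V] [TopologicalSpace V] (S : Set V) : Set V :=
  closure (convexHull ℝ S)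

/-- `sMul l f` is the function `l·f`, with the convention `0·f = I_{dom f}`
(i.e. `(l·f) z = +∞` whenever `f z = +∞`). -/
def sMul (l : ℝ) (f : X → EReal) : X → EReal :=
  fun z => if f z = ⊤ then ⊤ else (l : EReal) * f z

/-! ### Auxiliary lemmas -/

set_option linter.unusedSectionVars false
set_option maxHeartbeats 1000000

theorem ereal_btwn {r : ℝ} {e : EReal} (h : (r : EReal) < e) :
    ∃ c : ℝ, r < c ∧ (c : EReal) < e := by
  obtain ⟨c, h1, h2⟩ := EReal.lt_iff_exists_real_btwn.1 h
  exact ⟨c, EReal.coe_lt_coe_iff.1 h1, h2⟩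

theorem ereal_real {e : EReal} (h1 : e ≠ ⊤) (h2 : e ≠ ⊥) : ∃ v : ℝ, e = (v : EReal) :=
  ⟨e.toReal, (EReal.coe_toReal h1 h2).symm⟩

theorem ereal_real_of_le {e : EReal} {c : ℝ} (h : e ≤ (c : EReal)) (h2 : e ≠ ⊥) :
    ∃ v : ℝ, e = (v : EReal) ∧ v ≤ c := by
  have ht : e ≠ ⊤ := fun he => by rw [he] at h; exact absurd h (by simp)
  obtain ⟨v, hv⟩ := ereal_real ht h2
  refine ⟨v, hv, ?_⟩
  rw [hv] at h; exact EReal.coe_le_coe_iff.1 h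

theorem ereal_real_of_lt {e : EReal} {c : ℝ} (h : e < (c : EReal)) (h2 : e ≠ ⊥) :
    ∃ v : ℝ, e = (v : EReal) ∧ v < c := by
  obtain ⟨v, hv, hvc⟩ := ereal_real_of_le h.le h2
  refine ⟨v, hv, ?_⟩
  rw [hv] at h; exact EReal.coe_lt_coe_iff.1 h

theorem cvx_real {g : X → EReal} (hg : EConvexOn' g) {w₁ w₂ : X} {v₁ v₂ : ℝ}
    (h1 : g w₁ = (v₁ : EReal)) (h2 : g w₂ = (v₂ : EReal)) {a b : ℝ}
    (ha : 0 ≤ a) (hb : 0 ≤ b) (hab : a + b = 1) :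
    g (a • w₁ + b • w₂) ≤ ((a * v₁ + b * v₂ : ℝ) : EReal) := by
  have := hg w₁ w₂ a b ha hb hab
  rw [h1, h2] at this
  calc g (a • w₁ + b • w₂) ≤ (a : EReal) * (v₁ : EReal) + (b : EReal) * (v₂ : EReal) := this
    _ = ((a * v₁ + b * v₂ : ℝ) : EReal) := by
        rw [← EReal.coe_mul, ← EReal.coe_mul, ← EReal.coe_add]

theorem sMul_apply_real {ρ : ℝ} {f : X → EReal} {w : X} {v : ℝ} (hv : f w = (v : EReal)) :
    sMul ρ f w = ((ρ * v : ℝ) : EReal) := by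
  rw [sMul, hv]
  simp only [EReal.coe_ne_top, if_false, EReal.coe_mul]

theorem sMul_top {ρ : ℝ} {f : X → EReal} {w : X} (hv : f w = ⊤) : sMul ρ f w = ⊤ := by
  rw [sMul, hv]; simp

theorem sMul_ne_top {ρ : ℝ} {f : X → EReal} {w : X} (h : sMul ρ f w ≠ ⊤) : f w ≠ ⊤ :=
  fun hc => h (sMul_top hc)

theorem sMul_ne_bot {ρ : ℝ} {f : X → EReal} (hb : ∀ y, f y ≠ ⊥) (w : X) :
    sMul ρ f w ≠ ⊥ := by
  by_cases h : f w = ⊤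
  · rw [sMul_top h]; simp
  · obtain ⟨v, hv⟩ := ereal_real h (hb w)
    rw [sMul_apply_real hv]; exact EReal.coe_ne_bot _

theorem mul_nonneg_ne_bot {c : ℝ} (hc : 0 ≤ c) {e : EReal} (he : e ≠ ⊥) :
    (c : EReal) * e ≠ ⊥ := by
  induction e using EReal.rec with
  | bot => exact absurd rfl he
  | coe v => rw [← EReal.coe_mul]; exact EReal.coe_ne_bot _
  | top =>
    rcases eq_or_lt_of_le hc with h0 | hpos
    · rw [← h0, EReal.coe_zero, zero_mul]; simp
    · rw [EReal.mul_top_of_pos (by exact_mod_cast hpos)]; simp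

theorem sMul_convex {ρ : ℝ} (hρ : 0 < ρ) {f : X → EReal} (hc : EConvexOn' f)
    (hb : ∀ y, f y ≠ ⊥) : EConvexOn' (sMul ρ f) := by
  intro w₁ w₂ a b ha hb' hab
  rcases eq_or_lt_of_le ha with ha0 | hapos
  · have hb1 : b = 1 := by linarith
    subst hb1
    rw [← ha0]
    simp only [zero_smul, zero_add, one_smul]
    rw [EReal.coe_zero, EReal.coe_one, zero_mul, one_mul, zero_add]
  rcases eq_or_lt_of_le hb' with hb0 | hbpos
  · have ha1 : a = 1 := by linarith
    subst ha1
    rw [← hb0]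
    simp only [one_smul, zero_smul, add_zero]
    rw [EReal.coe_zero, EReal.coe_one, zero_mul, one_mul, add_zero]
  by_cases h1 : f w₁ = ⊤
  · have hT : (a : EReal) * sMul ρ f w₁ = ⊤ := by
      rw [sMul_top h1]; exact EReal.mul_top_of_pos (by exact_mod_cast hapos)
    rw [hT, EReal.top_add_of_ne_bot (mul_nonneg_ne_bot hb' (sMul_ne_bot hb w₂))]
    exact le_top
  by_cases h2 : f w₂ = ⊤
  · have hT : (b : EReal) * sMul ρ f w₂ = ⊤ := by
      rw [sMul_top h2]; exact EReal.mul_top_of_pos (by exact_mod_cast hbpos)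
    rw [hT, EReal.add_top_of_ne_bot (mul_nonneg_ne_bot ha (sMul_ne_bot hb w₁))]
    exact le_top
  obtain ⟨v₁, hv₁⟩ := ereal_real h1 (hb w₁)
  obtain ⟨v₂, hv₂⟩ := ereal_real h2 (hb w₂)
  have hcomb := cvx_real hc hv₁ hv₂ ha hb' hab
  obtain ⟨v, hv, hvle⟩ := ereal_real_of_le hcomb (hb _)
  rw [sMul_apply_real hv, sMul_apply_real hv₁, sMul_apply_real hv₂,
    ← EReal.coe_mul, ← EReal.coe_mul, ← EReal.coe_add, EReal.coe_le_coe_iff]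
  nlinarith [hρ.le]

theorem sMul_lsc {ρ : ℝ} (hρ : 0 < ρ) {f : X → EReal} (hf : LowerSemicontinuous f)
    (hb : ∀ y, f y ≠ ⊥) : LowerSemicontinuous (sMul ρ f) := by
  rw [lowerSemicontinuous_iff_isOpen_preimage]
  intro y
  induction y using EReal.rec with
  | bot =>
    have : sMul ρ f ⁻¹' Ioi ⊥ = univ := by
      ext w; simp [Ioi, bot_lt_iff_ne_bot, sMul_ne_bot hb w]
    rw [this]; exact isOpen_univ
  | top =>
    have : sMul ρ f ⁻¹' Ioi ⊤ = ∅ := by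
      ext w; simp
    rw [this]; exact isOpen_empty
  | coe c =>
    have : sMul ρ f ⁻¹' Ioi ((c : EReal)) = f ⁻¹' Ioi ((c / ρ : ℝ) : EReal) := by
      ext w
      simp only [mem_preimage, mem_Ioi]
      by_cases h : f w = ⊤
      · simp [sMul_top h, h, EReal.coe_lt_top]
      · obtain ⟨v, hv⟩ := ereal_real h (hb w)
        rw [sMul_apply_real hv, hv, EReal.coe_lt_coe_iff, EReal.coe_lt_coe_iff,
          div_lt_iff₀ hρ, mul_comm]
    rw [this]
    exact lowerSemicontinuous_iff_isOpen_preimage.1 hf _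

instance : LocallyConvexSpace ℝ (WeakDual ℝ X) :=
  WeakBilin.locallyConvexSpace (B := topDualPairing ℝ X)

/-- Every continuous linear functional on the weak-* dual is an evaluation. -/
theorem weakdual_eval_exists (φ : WeakDual ℝ X →L[ℝ] ℝ) :
    ∃ z : X, ∀ q : WeakDual ℝ X, φ q = q z := by
  have hb := LinearMap.hasBasis_weakBilin (topDualPairing ℝ X)
  have h0 : φ ⁻¹' (Metric.ball (0:ℝ) 1) ∈ 𝓝 (0 : WeakDual ℝ X) := by
    apply φ.continuous.continuousAt.preimage_mem_nhds
    simp [Metric.ball_mem_nhds]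
  replace h0 := hb.mem_iff.1 h0
  obtain ⟨U, hU, hUsub⟩ := h0
  have hU' : U ∈ (topDualPairing ℝ X).toSeminormFamily.basisSets := hU
  rw [SeminormFamily.basisSets_iff] at hU'
  obtain ⟨s, r, hr, rfl⟩ := hU'
  have hker : ∀ q : WeakDual ℝ X, (∀ y ∈ s, q y = 0) → φ q = 0 := by
    intro q hq
    by_contra hne
    set c : ℝ := 2 / |φ q| with hc
    have hφq : 0 < |φ q| := abs_pos.2 hne
    have hmem : (c • q) ∈ Seminorm.ball (s.sup ((topDualPairing ℝ X).toSeminormFamily)) 0 r := by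
      refine (Seminorm.mem_ball_zero _).2 ?_
      apply Seminorm.finset_sup_apply_lt hr
      intro y hy
      show ‖(c • q) y‖ < r
      have hcq : (c • q) y = c * q y := rfl
      rw [hcq, hq y hy, mul_zero, norm_zero]; exact hr
    have this : dist (φ (c • q)) 0 < 1 := hUsub hmem
    simp only [mem_preimage, Metric.mem_ball, dist_zero_right] at this
    have hφc : φ (c • q) = c * φ q := by rw [map_smul]; rfl
    rw [hφc] at this
    have h1 : |c| * |φ q| < 1 := by
      simpa [Real.norm_eq_abs, abs_mul] using this
    have h2 : |c| = 2 / |φ q| := by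
      rw [hc, abs_div, abs_abs]; norm_num
    rw [h2, div_mul_cancel₀ _ (ne_of_gt hφq)] at h1
    linarith
  classical
  set L : {y // y ∈ s} → (X →L[ℝ] ℝ) →ₗ[ℝ] ℝ := fun i =>
    { toFun := fun q => q (i : X)
      map_add' := fun a b => rfl
      map_smul' := fun c a => rfl }
  have hK : (⨅ i, LinearMap.ker (L i)) ≤ LinearMap.ker (φ.toLinearMap : (X →L[ℝ] ℝ) →ₗ[ℝ] ℝ) := by
    intro q hq
    simp only [Submodule.mem_iInf, LinearMap.mem_ker] at hq ⊢
    exact hker q (fun y hy => hq ⟨y, hy⟩)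
  have hspan := mem_span_of_iInf_ker_le_ker hK
  replace hspan := (Submodule.mem_span_range_iff_exists_fun ℝ).1 hspan
  obtain ⟨c, hc⟩ := hspan
  refine ⟨∑ i : {y // y ∈ s}, c i • (i : X), fun q => ?_⟩
  have h := LinearMap.congr_fun hc (show X →L[ℝ] ℝ from q)
  rw [LinearMap.sum_apply] at h
  have h2 : q (∑ i : {y // y ∈ s}, c i • (i : X)) = ∑ i : {y // y ∈ s}, c i • q (i : X) := by
    rw [map_sum]
    exact Finset.sum_congr rfl (fun i _ => by rw [map_smul])
  exact h.symm.trans h2.symm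
open Filter in
theorem key_lemma {g : X → EReal} (hcvx : EConvexOn' g) (hlsc : LowerSemicontinuous g)
    (hbot : ∀ y, g y ≠ ⊥) (x z : X) (gx : ℝ) (hgx : g x = (gx : EReal))
    (ε b d : ℝ) (hε : 0 < ε) (hd : 0 < d)
    (hyp : ∀ s : ℝ, 0 ≤ s → ((gx - ε + s * (b + d) : ℝ) : EReal) ≤ g (x + s • z)) :
    ∃ q : WeakDual ℝ X, q ∈ esubdiff g x ε ∧ b ≤ q z := by
  classical
  set k : ℝ := b + d / 2 with hk
  set Φ : (X × ℝ) × ℝ → X × ℝ :=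
    fun p => (p.1.1 - x - p.2 • z, p.1.2 - (gx - ε + p.2 * k)) with hΦdef
  set P : Set ((X × ℝ) × ℝ) := {p | g p.1.1 ≤ (p.1.2 : EReal) ∧ 0 ≤ p.2} with hPdef
  set M : Set (X × ℝ) := Φ '' P with hMdef
  -- step 1 : 0 ∉ closure M
  have h0 : (0 : X × ℝ) ∉ closure M := by
    intro h0
    set G : Filter ((X × ℝ) × ℝ) := comap Φ (𝓝 0) ⊓ 𝓟 P with hGdef
    have hG : G.NeBot := by
      rw [hGdef, Filter.inf_principal_neBot_iff]
      intro U hU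
      obtain ⟨N, hN, hNsub⟩ := Filter.mem_comap.1 hU
      obtain ⟨w, hwN, hwM⟩ := mem_closure_iff_nhds.1 h0 N hN
      obtain ⟨p, hpP, hpw⟩ := hwM
      exact ⟨p, hNsub (by rw [mem_preimage, hpw]; exact hwN), hpP⟩
    have hΦt : Tendsto Φ G (𝓝 0) := tendsto_comap.mono_left inf_le_left
    have hPmem : P ∈ G := mem_inf_of_right (mem_principal_self P)
    set m : (X × ℝ) × ℝ → ℝ := fun p => p.2 with hmdef
    set Gs : Filter ℝ := map m G with hGsdef
    have hGs : Gs.NeBot := hG.map m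
    have hΦ1 : Tendsto (fun p => (Φ p).1) G (𝓝 0) :=
      (continuous_fst.tendsto (0 : X × ℝ)).comp hΦt
    have hΦ2 : Tendsto (fun p => (Φ p).2) G (𝓝 0) :=
      (continuous_snd.tendsto (0 : X × ℝ)).comp hΦt
    by_cases hB : (Gs ⊓ atTop).NeBot
    · -- unbounded case
      set H : Filter ((X × ℝ) × ℝ) := G ⊓ comap m atTop with hHdef
      have hpp := Filter.push_pull m G atTop
      have hH : H.NeBot := by
        rw [← Filter.map_neBot_iff m, hHdef, hpp]
        exact hB
      have hsT : Tendsto m H atTop := tendsto_comap.mono_left inf_le_right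
      have hPH : ∀ᶠ p in H, g p.1.1 ≤ (p.1.2 : EReal) ∧ 0 ≤ p.2 :=
        eventually_of_mem (mem_inf_of_left hPmem) fun p hp => hp
      set c₀ : ℝ := max 1 (2 * ε / d + 1) with hc₀def
      have hc₀1 : (1:ℝ) ≤ c₀ := le_max_left _ _
      have hc₀pos : (0:ℝ) < c₀ := lt_of_lt_of_le one_pos hc₀1
      have hc₀ε : 2 * ε / d < c₀ := lt_of_lt_of_le (lt_add_one _) (le_max_right _ _)
      have hμ₀ : 0 < c₀ * (d / 2) - ε := by
        have := (div_lt_iff₀ hd).1 hc₀ε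
        nlinarith
      set w₀ : X := x + c₀ • z with hw₀def
      have hglb : ((gx + c₀ * k + (c₀ * (d/2) - ε) : ℝ) : EReal) ≤ g w₀ := by
        have h1 := hyp c₀ hc₀pos.le
        have harith : gx - ε + c₀ * (b + d) = gx + c₀ * k + (c₀ * (d/2) - ε) := by
          rw [hk]; ring
        rw [harith] at h1
        exact h1
      set c₂ : ℝ := gx + c₀ * k + (c₀ * (d/2) - ε) / 2 with hc₂def
      have hc₂lt : (c₂ : EReal) < g w₀ := by
        refine lt_of_lt_of_le ?_ hglb
        rw [EReal.coe_lt_coe_iff, hc₂def]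
        linarith
      have hnb : ∀ᶠ y' in 𝓝 w₀, (c₂ : EReal) < g y' := hlsc w₀ _ hc₂lt
      set lam : (X × ℝ) × ℝ → ℝ := fun p => c₀ / p.2 with hlamdef
      have hlam0 : Tendsto lam H (𝓝 0) := by
        have h1 : Tendsto (fun p => (m p)⁻¹) H (𝓝 0) :=
          tendsto_inv_atTop_zero.comp hsT
        have h2 := h1.const_mul c₀
        rw [mul_zero] at h2
        exact h2.congr fun p => (div_eq_mul_inv c₀ (p.2)).symm
      set v : (X × ℝ) × ℝ → X := fun p => (1 - lam p) • x + lam p • p.1.1 with hvdef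
      have hsev : ∀ᶠ p in H, max c₀ 1 ≤ m p :=
        hsT.eventually (eventually_ge_atTop (max c₀ 1))
      have hmppos : ∀ p : (X × ℝ) × ℝ, max c₀ 1 ≤ m p → (0:ℝ) < m p := fun p hp =>
        lt_of_lt_of_le (lt_of_lt_of_le one_pos (le_max_right c₀ 1)) hp
      have hveq : ∀ᶠ p in H, v p = w₀ + lam p • (Φ p).1 := by
        filter_upwards [hsev] with p hp
        have hmp : (0:ℝ) < m p := hmppos p hp
        have hlams : lam p * p.2 = c₀ := by
          show c₀ / p.2 * p.2 = c₀
          exact div_mul_cancel₀ _ (ne_of_gt hmp)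
        show (1 - lam p) • x + lam p • p.1.1
            = (x + c₀ • z) + lam p • (p.1.1 - x - p.2 • z)
        match_scalars <;> first | ring1 | linear_combination hlams
      have hvt : Tendsto v H (𝓝 w₀) := by
        have h2 : Tendsto (fun p => w₀ + lam p • (Φ p).1) H (𝓝 (w₀ + (0:ℝ) • (0:X))) :=
          tendsto_const_nhds.add (hlam0.smul (hΦ1.mono_left inf_le_left))
        rw [zero_smul, add_zero] at h2
        exact Tendsto.congr' (hveq.mono fun p hp => hp.symm) h2
      have hlow : ∀ᶠ p in H, (c₂ : EReal) < g (v p) := hvt.eventually hnb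
      have hA : Tendsto (fun p => (1 - lam p) * gx + lam p * p.1.2) H
          (𝓝 (gx + c₀ * k)) := by
        have base : Tendsto (fun p => gx - lam p * gx + (lam p * (Φ p).2 + lam p * (gx - ε)
            + c₀ * k)) H (𝓝 (gx - 0 * gx + (0 * 0 + 0 * (gx - ε) + c₀ * k))) := by
          apply Tendsto.add
          · exact tendsto_const_nhds.sub (hlam0.mul tendsto_const_nhds)
          · exact ((hlam0.mul (hΦ2.mono_left inf_le_left)).add
              (hlam0.mul tendsto_const_nhds)).add tendsto_const_nhds
        have base' : Tendsto (fun p => gx - lam p * gx + (lam p * (Φ p).2 + lam p * (gx - ε)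
            + c₀ * k)) H (𝓝 (gx + c₀ * k)) := by
          have : gx - 0 * gx + ((0:ℝ) * 0 + 0 * (gx - ε) + c₀ * k) = gx + c₀ * k := by ring
          rwa [this] at base
        refine Tendsto.congr' ?_ base'
        filter_upwards [hsev] with p hp
        have hmp : (0:ℝ) < m p := hmppos p hp
        have hlams : lam p * p.2 = c₀ := by
          show c₀ / p.2 * p.2 = c₀
          exact div_mul_cancel₀ _ (ne_of_gt hmp)
        have hr : p.1.2 = (Φ p).2 + (gx - ε) + p.2 * k := by
          show p.1.2 = (p.1.2 - (gx - ε + p.2 * k)) + (gx - ε) + p.2 * k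
          ring
        rw [hr]
        linear_combination (-k) * hlams
      have hAev : ∀ᶠ p in H, (1 - lam p) * gx + lam p * p.1.2 < c₂ :=
        hA.eventually_lt_const (by rw [hc₂def]; linarith)
      have hup : ∀ᶠ p in H, g (v p) ≤ (((1 - lam p) * gx + lam p * p.1.2 : ℝ) : EReal) := by
        filter_upwards [hsev, hPH] with p hps hpP
        have hmp : (0:ℝ) < m p := hmppos p hps
        have hlampos : 0 ≤ lam p := div_nonneg hc₀pos.le hmp.le
        have hlamle : lam p ≤ 1 := by
          show c₀ / p.2 ≤ 1
          rw [div_le_one hmp]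
          exact le_trans (le_max_left c₀ 1) hps
        obtain ⟨vy, hvy, hvyle⟩ := ereal_real_of_le hpP.1 (hbot _)
        have hcx := cvx_real hcvx hgx hvy (a := 1 - lam p) (b := lam p)
          (by linarith) hlampos (by ring)
        refine le_trans hcx ?_
        rw [EReal.coe_le_coe_iff]
        nlinarith
      obtain ⟨p, h1, h2, h3⟩ := (hlow.and (hup.and hAev)).exists
      have hcc : (c₂ : EReal) < (c₂ : EReal) :=
        lt_of_lt_of_le (lt_of_lt_of_le h1 h2) (by exact_mod_cast h3.le)
      exact lt_irrefl _ hcc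
    · -- bounded case
      have hbot' : Gs ⊓ atTop = ⊥ := not_neBot.1 hB
      obtain ⟨U, hU, V, hV, hUV⟩ := Filter.inf_eq_bot_iff.1 hbot'
      obtain ⟨K, hK⟩ := mem_atTop_sets.1 hV
      have hUsub : U ⊆ Iio K := by
        intro t ht
        by_contra hcon
        have : t ∈ U ∩ V := ⟨ht, hK t (not_lt.1 hcon)⟩
        rw [hUV] at this; exact this
      have hIio : Iio K ∈ Gs := mem_of_superset hU hUsub
      have hIci : Ici (0:ℝ) ∈ Gs := by
        rw [hGsdef, mem_map]
        exact mem_of_superset hPmem (fun p hp => hp.2)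
      have hIcc : Icc (0:ℝ) (max K 0) ∈ Gs := by
        apply mem_of_superset (inter_mem hIio hIci)
        rintro t ⟨h1, h2⟩
        exact ⟨h2, le_trans (le_of_lt h1) (le_max_left _ _)⟩
      obtain ⟨s₀, hs₀mem, hs₀cl⟩ := (isCompact_Icc (a := (0:ℝ)) (b := max K 0)).exists_clusterPt
        (le_principal_iff.2 hIcc)
      set H : Filter ((X × ℝ) × ℝ) := G ⊓ comap m (𝓝 s₀) with hHdef
      have hcl' : (Gs ⊓ 𝓝 s₀).NeBot := by
        rw [ClusterPt] at hs₀cl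
        rwa [inf_comm] at hs₀cl
      have hpp := Filter.push_pull m G (𝓝 s₀)
      have hH : H.NeBot := by
        rw [← Filter.map_neBot_iff m, hHdef, hpp]
        exact hcl'
      have hPH : ∀ᶠ p in H, g p.1.1 ≤ (p.1.2 : EReal) ∧ 0 ≤ p.2 :=
        eventually_of_mem (mem_inf_of_left hPmem) fun p hp => hp
      have hsm : Tendsto m H (𝓝 s₀) := tendsto_comap.mono_left inf_le_right
      set w₀ : X := x + s₀ • z with hw₀def
      have hyt : Tendsto (fun p : (X × ℝ) × ℝ => p.1.1) H (𝓝 w₀) := by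
        have h2 : Tendsto (fun p => (Φ p).1 + (x + m p • z)) H (𝓝 (0 + (x + s₀ • z))) :=
          (hΦ1.mono_left inf_le_left).add (tendsto_const_nhds.add (hsm.smul_const z))
        rw [zero_add] at h2
        refine h2.congr (fun p => ?_)
        show (p.1.1 - x - p.2 • z) + (x + p.2 • z) = p.1.1
        abel
      set r₀ : ℝ := gx - ε + s₀ * k with hr₀def
      have hrt : Tendsto (fun p : (X × ℝ) × ℝ => p.1.2) H (𝓝 r₀) := by
        have h2 : Tendsto (fun p => (Φ p).2 + (gx - ε + m p * k)) H
            (𝓝 (0 + ((gx - ε) + s₀ * k))) :=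
          (hΦ2.mono_left inf_le_left).add ((hsm.mul_const k).const_add (gx - ε))
        rw [zero_add] at h2
        refine h2.congr (fun p => ?_)
        show (p.1.2 - (gx - ε + p.2 * k)) + (gx - ε + p.2 * k) = p.1.2
        ring
      have hs₀0 : 0 ≤ s₀ := hs₀mem.1
      have hr₀lt : (r₀ : EReal) < g w₀ := by
        rcases eq_or_lt_of_le hs₀0 with h0' | hpos
        · rw [hw₀def, ← h0', zero_smul, add_zero, hgx, hr₀def, ← h0']
          rw [EReal.coe_lt_coe_iff]
          linarith
        · refine lt_of_lt_of_le ?_ (hyp s₀ hs₀0)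
          rw [EReal.coe_lt_coe_iff, hr₀def, hk]
          nlinarith
      obtain ⟨c₂, hr₀c₂, hc₂g⟩ := ereal_btwn hr₀lt
      have hlow : ∀ᶠ p in H, (c₂ : EReal) < g p.1.1 := hyt.eventually (hlsc w₀ _ hc₂g)
      have hup : ∀ᶠ p in H, p.1.2 < c₂ := hrt.eventually_lt_const hr₀c₂
      obtain ⟨p, h1, h2, h3⟩ := (hlow.and (hup.and hPH)).exists
      have hcc : (c₂ : EReal) < (c₂ : EReal) :=
        lt_of_lt_of_le h1 (le_trans h3.1 (by exact_mod_cast h2.le))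
      exact lt_irrefl _ hcc
  -- step 2 : M is convex
  have hMcvx : Convex ℝ M := by
    rintro _ ⟨p₁, hp₁, rfl⟩ _ ⟨p₂, hp₂, rfl⟩ a b' ha hb hab
    obtain ⟨v₁, hv₁, hv₁le⟩ := ereal_real_of_le hp₁.1 (hbot _)
    obtain ⟨v₂, hv₂, hv₂le⟩ := ereal_real_of_le hp₂.1 (hbot _)
    refine ⟨((a • p₁.1.1 + b' • p₂.1.1, a * p₁.1.2 + b' * p₂.1.2), a * p₁.2 + b' * p₂.2),
      ⟨?_, ?_⟩, ?_⟩
    · have hcx := cvx_real hcvx hv₁ hv₂ ha hb hab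
      refine le_trans hcx ?_
      rw [EReal.coe_le_coe_iff]
      dsimp only
      have hm1 := mul_le_mul_of_nonneg_left hv₁le ha
      have hm2 := mul_le_mul_of_nonneg_left hv₂le hb
      linarith
    · have h1 := hp₁.2
      have h2 := hp₂.2
      exact add_nonneg (mul_nonneg ha h1) (mul_nonneg hb h2)
    · show ((a • p₁.1.1 + b' • p₂.1.1) - x - (a * p₁.2 + b' * p₂.2) • z,
        (a * p₁.1.2 + b' * p₂.1.2) - (gx - ε + (a * p₁.2 + b' * p₂.2) * k))
        = a • Φ p₁ + b' • Φ p₂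
      have hΦ1 : Φ p₁ = (p₁.1.1 - x - p₁.2 • z, p₁.1.2 - (gx - ε + p₁.2 * k)) := rfl
      have hΦ2 : Φ p₂ = (p₂.1.1 - x - p₂.2 • z, p₂.1.2 - (gx - ε + p₂.2 * k)) := rfl
      rw [hΦ1, hΦ2, Prod.smul_mk, Prod.smul_mk, Prod.mk_add_mk]
      refine Prod.ext ?_ ?_
      · show (a • p₁.1.1 + b' • p₂.1.1) - x - (a * p₁.2 + b' * p₂.2) • z
          = a • (p₁.1.1 - x - p₁.2 • z) + b' • (p₂.1.1 - x - p₂.2 • z)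
        match_scalars <;>
          first | ring1 | linear_combination hab | linear_combination -hab
      · show (a * p₁.1.2 + b' * p₂.1.2) - (gx - ε + (a * p₁.2 + b' * p₂.2) * k)
          = a • (p₁.1.2 - (gx - ε + p₁.2 * k)) + b' • (p₂.1.2 - (gx - ε + p₂.2 * k))
        simp only [smul_eq_mul]
        linear_combination (gx - ε) * hab
  -- step 3 : separation
  obtain ⟨φ, u, hforall, hu0⟩ :=
    geometric_hahn_banach_closed_point (hMcvx.closure) isClosed_closure h0
  rw [map_zero] at hu0
  set ψ : X →L[ℝ] ℝ := φ.comp (ContinuousLinearMap.inl ℝ X ℝ) with hψdef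
  set cc : ℝ := φ (0, 1) with hccdef
  have hφsplit : ∀ (y : X) (r : ℝ), φ (y, r) = ψ y + r * cc := by
    intro y r
    have hyr : (y, r) = ((y, (0:ℝ)) : X × ℝ) + r • ((0:X), (1:ℝ)) := by
      rw [Prod.smul_mk, Prod.mk_add_mk]
      simp
    rw [hyr, map_add, map_smul]
    rw [hψdef]
    simp [ContinuousLinearMap.comp_apply, ContinuousLinearMap.inl_apply, smul_eq_mul, hccdef]
  have key : ∀ (y : X) (r s : ℝ), g y ≤ (r : EReal) → 0 ≤ s →
      ψ (y - x - s • z) + (r - (gx - ε + s * k)) * cc < u := by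
    intro y r s hyr hs
    have hmem : Φ ((y, r), s) ∈ M := ⟨((y, r), s), ⟨hyr, hs⟩, rfl⟩
    have h1 := hforall _ (subset_closure hmem)
    have hΦa : Φ ((y, r), s) = (y - x - s • z, r - (gx - ε + s * k)) := rfl
    rw [hΦa] at h1
    rwa [hφsplit] at h1
  -- ε * cc < u
  have h00 : ε * cc < u := by
    have hkey := key x gx 0 (le_of_eq hgx) le_rfl
    have e1 : x - x - (0:ℝ) • z = 0 := by simp
    rw [e1, map_zero, zero_add] at hkey
    have e2 : gx - (gx - ε + 0 * k) = ε := by ring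
    rwa [e2] at hkey
  have hcneg : cc < 0 := by
    by_contra hcon
    push_neg at hcon
    nlinarith
  have hcinv : 0 < -cc := neg_pos.2 hcneg
  have hccne : cc ≠ 0 := ne_of_lt hcneg
  -- slope bound : ψ z ≥ -cc * k
  have hslope : -cc * k ≤ ψ z := by
    by_contra hcon
    push_neg at hcon
    set A : ℝ := -cc * k - ψ z with hAdef
    have hApos : 0 < A := by rw [hAdef]; linarith
    set s : ℝ := (u - ε * cc + 1) / A with hsdef
    have hspos : 0 < s := div_pos (by linarith) hApos
    have hkey := key x gx s (le_of_eq hgx) hspos.le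
    rw [sub_self, zero_sub, map_neg, map_smul] at hkey
    have e2 : gx - (gx - ε + s * k) = ε - s * k := by ring
    rw [e2] at hkey
    have hsA : s * A = u - ε * cc + 1 := by
      rw [hsdef, div_mul_cancel₀ _ (ne_of_gt hApos)]
    have hkey' : -(s * ψ z) + (ε - s * k) * cc < u := by
      simpa [smul_eq_mul] using hkey
    have hexp : s * A = -(s * ψ z) + (ε - s * k) * cc - ε * cc := by
      rw [hAdef]; ring
    nlinarith
  refine ⟨(-cc)⁻¹ • ψ, ⟨hε.le, by rw [hgx]; exact EReal.coe_ne_top _,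
    by rw [hgx]; exact EReal.coe_ne_bot _, ?_⟩, ?_⟩
  · intro y
    by_cases hy : g y = ⊤
    · rw [hy]; exact le_top
    obtain ⟨vy, hvy⟩ := ereal_real hy (hbot y)
    have hkey := key y vy 0 (le_of_eq hvy) le_rfl
    have e1 : y - x - (0:ℝ) • z = y - x := by simp
    rw [e1, map_sub] at hkey
    have e2 : vy - (gx - ε + 0 * k) = vy - gx + ε := by ring
    rw [e2] at hkey
    have happ : ∀ w : X, ((-cc)⁻¹ • ψ : WeakDual ℝ X) w = (-cc)⁻¹ * ψ w := fun w => rfl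
    rw [hgx, hvy]
    change ((gx:ℝ):EReal) + (((-cc)⁻¹ * ψ y - (-cc)⁻¹ * ψ x - ε : ℝ) : EReal) ≤ ((vy:ℝ):EReal)
    have hineq : gx + ((-cc)⁻¹ * ψ y - (-cc)⁻¹ * ψ x - ε) ≤ vy := by
      have h1 : ψ y - ψ x < u - (vy - gx + ε) * cc := by linarith
      have h2 : (-cc)⁻¹ * (ψ y - ψ x) < (-cc)⁻¹ * (u - (vy - gx + ε) * cc) :=
        (mul_lt_mul_iff_right₀ (inv_pos.2 hcinv)).2 h1
      have hncc : -cc ≠ 0 := ne_of_gt hcinv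
      have h3 : (-cc)⁻¹ * (u - (vy - gx + ε) * cc)
          = (-cc)⁻¹ * u + (vy - gx + ε) := by
        field_simp
        ring
      have h4 : (-cc)⁻¹ * u < 0 := mul_neg_of_pos_of_neg (inv_pos.2 hcinv) hu0
      have h5 : (-cc)⁻¹ * (ψ y - ψ x) = (-cc)⁻¹ * ψ y - (-cc)⁻¹ * ψ x := by ring
      rw [h5, h3] at h2
      linarith
    calc ((gx : ℝ) : EReal) + (((-cc)⁻¹ * ψ y - (-cc)⁻¹ * ψ x - ε : ℝ) : EReal)
        = ((gx + ((-cc)⁻¹ * ψ y - (-cc)⁻¹ * ψ x - ε) : ℝ) : EReal) := by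
          rw [EReal.coe_add]
      _ ≤ ((vy : ℝ) : EReal) := EReal.coe_le_coe_iff.2 hineq
  · have happ : ((-cc)⁻¹ • ψ : WeakDual ℝ X) z = (-cc)⁻¹ * ψ z := rfl
    change b ≤ (-cc)⁻¹ * ψ z
    have h1 : (-cc)⁻¹ * (-cc * k) ≤ (-cc)⁻¹ * ψ z :=
      (mul_le_mul_iff_right₀ (inv_pos.2 hcinv)).2 hslope
    have h2 : (-cc)⁻¹ * (-cc * k) = k := by
      rw [← mul_assoc, inv_mul_cancel₀ (ne_of_gt hcinv), one_mul]
    rw [h2, hk] at h1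
    linarith

/-- Theorem `t1`, equality at a minimizer: under (SH), if `x` is a global
minimizer of `f`, with `0 < ρ_t ≤ 1` and `inf_t ρ_t f_t(x) > −∞`,
`∂f(x) = ⋂_{ε>0} co‾((⋃_{t∈T(x)} ∂_ε f_t(x)) ∪ (⋃_{t∉T(x)} ε·∂_ε(ρ_t f_t)(x)))`. -/
theorem statement15 {T : Type*} [TopologicalSpace T] [CompactSpace T] [T2Space T] [Nonempty T]
    (f : T → X → EReal) (hf : ∀ t, Gamma0 (f t))
    (husc : ∀ z : X, UpperSemicontinuous fun t => f t z)
    (x : X) (hx : x ∈ edom (fun z => ⨆ t, f t z))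
    (hmin : ∀ y : X, (⨆ t, f t x) ≤ ⨆ t, f t y)
    (ρ : T → ℝ) (hρ : ∀ t, 0 < ρ t ∧ ρ t ≤ 1)
    (hinf : (⊥ : EReal) < ⨅ t, sMul (ρ t) (f t) x) :
    esubdiff (fun z => ⨆ t, f t z) x 0 =
      ⋂ (ε : ℝ) (_ : 0 < ε), cclo
        ((⋃ t ∈ {t : T | (⨆ s, f s x) ≤ f t x}, esubdiff (f t) x ε) ∪
         (⋃ t ∈ {t : T | (⨆ s, f s x) ≤ f t x}ᶜ,
            ε • esubdiff (sMul (ρ t) (f t)) x ε)) := by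
  classical
  obtain ⟨t₀⟩ := (inferInstance : Nonempty T)
  have hFx_top : (⨆ t, f t x) ≠ ⊤ := hx
  have hft_le_F : ∀ (t : T) (y : X), f t y ≤ ⨆ s, f s y := fun t y => le_iSup (fun s => f s y) t
  have hft_ne_bot : ∀ (t : T) (y : X), f t y ≠ ⊥ := fun t y => (hf t).1 y
  have hFx_ne_bot : (⨆ t, f t x) ≠ ⊥ := by
    intro hb
    have h1 := hft_le_F t₀ x
    rw [hb, le_bot_iff] at h1
    exact hft_ne_bot t₀ x h1
  set mR : ℝ := (⨆ t, f t x).toReal with hmRdef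
  have hFx : (⨆ t, f t x) = (mR : EReal) := (EReal.coe_toReal hFx_top hFx_ne_bot).symm
  have hftx_le : ∀ t : T, f t x ≤ (mR : EReal) := fun t => hFx ▸ hft_le_F t x
  have hftx_real : ∀ t : T, ∃ v : ℝ, f t x = (v : EReal) ∧ v ≤ mR := fun t =>
    ereal_real_of_le (hftx_le t) (hft_ne_bot t x)
  choose rt hrt hrtle using hftx_real
  have hmin' : ∀ y, (mR : EReal) ≤ ⨆ t, f t y := fun y => hFx ▸ hmin y
  -- the infimum bound
  have hμbot : (⨅ t, sMul (ρ t) (f t) x) ≠ ⊥ := ne_of_gt hinf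
  set μ : ℝ := (⨅ t, sMul (ρ t) (f t) x).toReal with hμdef
  have hμle : ∀ t : T, μ ≤ ρ t * rt t := by
    intro t
    have h1 : (⨅ s, sMul (ρ s) (f s) x) ≤ ((ρ t * rt t : ℝ) : EReal) := by
      rw [← sMul_apply_real (hrt t)]
      exact iInf_le _ t
    have h2 := EReal.toReal_le_toReal h1 hμbot (EReal.coe_ne_top _)
    rwa [EReal.toReal_coe] at h2
  apply Set.Subset.antisymm
  · -- hard inclusion : ∂f(x) ⊆ ⋂ …
    intro p hp
    simp only [Set.mem_iInter]
    intro ε hε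
    by_contra hpc
    -- separation
    obtain ⟨φ, u, hall, hupp⟩ := geometric_hahn_banach_closed_point
      ((convex_convexHull ℝ _).closure) isClosed_closure hpc
    obtain ⟨z, hz⟩ := weakdual_eval_exists φ
    have hpu : u < p z := by rwa [hz] at hupp
    have hAlt : ∀ t : T, (⨆ s, f s x) ≤ f t x → ∀ q ∈ esubdiff (f t) x ε, q z < u := by
      intro t ht q hq
      have hmem : q ∈ (⋃ t ∈ {t : T | (⨆ s, f s x) ≤ f t x}, esubdiff (f t) x ε) ∪
          (⋃ t ∈ {t : T | (⨆ s, f s x) ≤ f t x}ᶜ, ε • esubdiff (sMul (ρ t) (f t)) x ε) :=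
        Set.mem_union_left _ (Set.mem_biUnion ht hq)
      have := hall q (subset_closure (subset_convexHull ℝ _ hmem))
      rwa [hz] at this
    have hBlt : ∀ t : T, ¬ ((⨆ s, f s x) ≤ f t x) →
        ∀ q ∈ esubdiff (sMul (ρ t) (f t)) x ε, ε * q z < u := by
      intro t ht q hq
      have hmem : ε • q ∈ (⋃ t ∈ {t : T | (⨆ s, f s x) ≤ f t x}, esubdiff (f t) x ε) ∪
          (⋃ t ∈ {t : T | (⨆ s, f s x) ≤ f t x}ᶜ, ε • esubdiff (sMul (ρ t) (f t)) x ε) := by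
        refine Set.mem_union_right _
          (Set.mem_biUnion (show t ∈ {t : T | (⨆ s, f s x) ≤ f t x}ᶜ from ht) ⟨q, hq, rfl⟩)
      have := hall (ε • q) (subset_closure (subset_convexHull ℝ _ hmem))
      rw [hz] at this
      exact this
    set δ : ℝ := (p z - u) / 2 with hδdef
    have hδ : 0 < δ := by rw [hδdef]; linarith
    set γ : ℝ := u + δ with hγdef
    have hγ : γ < p z := by rw [hγdef, hδdef]; linarith
    -- pointwise claim
    have claim : ∀ t : T, ∃ s₁ : ℝ, 0 < s₁ ∧ ∃ U : Set T, IsOpen U ∧ t ∈ U ∧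
        ∀ t' ∈ U, ∀ s : ℝ, 0 < s → s ≤ s₁ →
          f t' (x + s • z) ≤ ((mR + s * γ : ℝ) : EReal) := by
      intro t
      by_cases ht : (⨆ s, f s x) ≤ f t x
      · -- active index
        have hftx : f t x = (mR : EReal) := le_antisymm (hftx_le t) (hFx ▸ ht)
        have hwit : ∃ s₁ : ℝ, 0 < s₁ ∧
            f t (x + s₁ • z) < ((mR - ε + s₁ * γ : ℝ) : EReal) := by
          by_contra hcon
          push_neg at hcon
          have hyp' : ∀ s : ℝ, 0 ≤ s →
              ((mR - ε + s * (u + δ) : ℝ) : EReal) ≤ f t (x + s • z) := by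
            intro s hs
            rcases eq_or_lt_of_le hs with h0 | hpos
            · rw [← h0, zero_smul, add_zero, hftx, mul_comm, mul_zero, add_zero,
                EReal.coe_le_coe_iff]
              linarith
            · have := hcon s hpos
              rwa [hγdef] at this
          obtain ⟨q, hq, hqz⟩ := key_lemma (hf t).2.2.1 (hf t).2.2.2 (hf t).1 x z mR hftx
            ε u δ hε hδ hyp'
          exact absurd (hAlt t ht q hq) (not_lt.2 hqz)
        obtain ⟨s₁, hs₁, hws⟩ := hwit
        refine ⟨s₁, hs₁, {t' | f t' (x + s₁ • z) < ((mR - ε + s₁ * γ : ℝ) : EReal)},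
          ?_, hws, ?_⟩
        · exact upperSemicontinuous_iff_isOpen_preimage.1 (husc (x + s₁ • z)) _
        · intro t' ht' s hs hss₁
          obtain ⟨w2, hw2, hw2lt⟩ := ereal_real_of_lt ht' (hft_ne_bot t' _)
          have hs₁ne : s₁ ≠ 0 := ne_of_gt hs₁
          have hθpos : 0 < s / s₁ := div_pos hs hs₁
          have hθle : s / s₁ ≤ 1 := by rw [div_le_one hs₁]; exact hss₁
          have hcomb := cvx_real (hf t').2.2.1 (hrt t') hw2
            (a := 1 - s / s₁) (b := s / s₁) (by linarith) hθpos.le (by ring)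
          have hpt : (1 - s / s₁) • x + (s / s₁) • (x + s₁ • z) = x + s • z := by
            match_scalars <;> field_simp <;> ring
          rw [hpt] at hcomb
          refine le_trans hcomb ?_
          rw [EReal.coe_le_coe_iff]
          have e3 : (s / s₁) * s₁ = s := by field_simp
          have e1 : (1 - s / s₁) * rt t' ≤ (1 - s / s₁) * mR :=
            mul_le_mul_of_nonneg_left (hrtle t') (by linarith)
          have e2 : (s / s₁) * w2 ≤ (s / s₁) * (mR - ε + s₁ * γ) :=
            mul_le_mul_of_nonneg_left hw2lt.le hθpos.le
          have e5 : (s / s₁) * (mR - ε + s₁ * γ)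
              = (s / s₁) * mR - (s / s₁) * ε + s * γ := by
            linear_combination γ * e3
          have e4 : 0 ≤ (s / s₁) * ε := mul_nonneg hθpos.le hε.le
          rw [e5] at e2
          linarith
      · -- inactive index
        have hlt : rt t < mR := by
          have h1 : f t x < (mR : EReal) := by
            rw [← hFx]
            exact lt_of_le_of_ne (hft_le_F t x) (fun he => ht (le_of_eq he.symm))
          rw [hrt t, EReal.coe_lt_coe_iff] at h1
          exact h1
        set η : ℝ := (mR - rt t) / 2 with hηdef
        have hη : 0 < η := by rw [hηdef]; linarith
        have hg : sMul (ρ t) (f t) x = ((ρ t * rt t : ℝ) : EReal) := sMul_apply_real (hrt t)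
        have hwit : ∃ s₁ : ℝ, 0 < s₁ ∧ sMul (ρ t) (f t) (x + s₁ • z)
            < ((ρ t * rt t - ε + s₁ * (u / ε + 1) : ℝ) : EReal) := by
          by_contra hcon
          push_neg at hcon
          have hyp' : ∀ s : ℝ, 0 ≤ s →
              ((ρ t * rt t - ε + s * (u / ε + 1) : ℝ) : EReal)
                ≤ sMul (ρ t) (f t) (x + s • z) := by
            intro s hs
            rcases eq_or_lt_of_le hs with h0 | hpos
            · rw [← h0, zero_smul, add_zero, hg, zero_mul, add_zero, EReal.coe_le_coe_iff]
              linarith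
            · exact hcon s hpos
          obtain ⟨q, hq, hqz⟩ := key_lemma (sMul_convex (hρ t).1 (hf t).2.2.1 (hf t).1)
            (sMul_lsc (hρ t).1 (hf t).2.2.2 (hf t).1) (sMul_ne_bot (hf t).1) x z
            (ρ t * rt t) hg ε (u / ε) 1 hε one_pos hyp'
          have h1 := hBlt t ht q hq
          have h2 : q z < u / ε := by
            rw [lt_div_iff₀ hε, mul_comm]
            exact h1
          linarith
        obtain ⟨s₁, hs₁, hws⟩ := hwit
        have hne : f t (x + s₁ • z) ≠ ⊤ := by
          apply sMul_ne_top (ρ := ρ t)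
          intro hcon
          rw [hcon] at hws
          exact absurd hws (by simp)
        obtain ⟨b2, hb2⟩ := ereal_real hne (hft_ne_bot t _)
        set ct : ℝ := b2 + 1 with hctdef
        set Kt : ℝ := (ct - mR + η) / s₁ - γ with hKtdef
        set s₀ : ℝ := if 0 < Kt then min s₁ (η / Kt) else s₁ with hs₀def
        have hs₀pos : 0 < s₀ := by
          rw [hs₀def]
          split_ifs with hK
          · exact lt_min hs₁ (div_pos hη hK)
          · exact hs₁
        have hs₀le : s₀ ≤ s₁ := by
          rw [hs₀def]; split_ifs; exacts [min_le_left _ _, le_refl _]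
        refine ⟨s₀, hs₀pos, {t' | f t' (x + s₁ • z) < ((ct : ℝ) : EReal)} ∩
          {t' | f t' x < ((mR - η : ℝ) : EReal)}, ?_, ⟨?_, ?_⟩, ?_⟩
        · exact (upperSemicontinuous_iff_isOpen_preimage.1 (husc (x + s₁ • z)) _).inter
            (upperSemicontinuous_iff_isOpen_preimage.1 (husc x) _)
        · show f t (x + s₁ • z) < ((ct : ℝ) : EReal)
          rw [hb2, hctdef, EReal.coe_lt_coe_iff]
          linarith
        · show f t x < ((mR - η : ℝ) : EReal)
          rw [hrt t, EReal.coe_lt_coe_iff, hηdef]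
          linarith
        · rintro t' ⟨ht1, ht2⟩ s hs hss₀
          obtain ⟨w2, hw2, hw2lt⟩ := ereal_real_of_lt ht1 (hft_ne_bot t' _)
          obtain ⟨w1, hw1, hw1lt⟩ := ereal_real_of_lt ht2 (hft_ne_bot t' _)
          have hss₁ : s ≤ s₁ := le_trans hss₀ hs₀le
          have hs₁ne : s₁ ≠ 0 := ne_of_gt hs₁
          have hθpos : 0 < s / s₁ := div_pos hs hs₁
          have hθle : s / s₁ ≤ 1 := by rw [div_le_one hs₁]; exact hss₁
          have hcomb := cvx_real (hf t').2.2.1 hw1 hw2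
            (a := 1 - s / s₁) (b := s / s₁) (by linarith) hθpos.le (by ring)
          have hpt : (1 - s / s₁) • x + (s / s₁) • (x + s₁ • z) = x + s • z := by
            match_scalars <;> field_simp <;> ring
          rw [hpt] at hcomb
          refine le_trans hcomb ?_
          rw [EReal.coe_le_coe_iff]
          have e1 : (1 - s / s₁) * w1 ≤ (1 - s / s₁) * (mR - η) :=
            mul_le_mul_of_nonneg_left hw1lt.le (by linarith)
          have e2 : (s / s₁) * w2 ≤ (s / s₁) * ct :=
            mul_le_mul_of_nonneg_left hw2lt.le hθpos.le
          have e3 : (s / s₁) * s₁ = s := by field_simp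
          -- (s/s₁) * (ct - mR + η) = s * (Kt + γ)
          have e6 : (s / s₁) * (ct - mR + η) = s * (Kt + γ) := by
            rw [hKtdef]
            ring
          have e7 : s * Kt ≤ η := by
            by_cases hK : 0 < Kt
            · have hsK : s ≤ η / Kt := by
                refine le_trans hss₀ ?_
                rw [hs₀def, if_pos hK]
                exact min_le_right _ _
              rw [le_div_iff₀ hK] at hsK
              linarith [hsK]
            · push_neg at hK
              have : s * Kt ≤ 0 := mul_nonpos_of_nonneg_of_nonpos hs.le hK
              linarith
          have eA : (1 - s / s₁) * w1 + (s / s₁) * w2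
              ≤ (1 - s / s₁) * (mR - η) + (s / s₁) * ct := by linarith [e1, e2]
          have eD : (1 - s / s₁) * (mR - η) + (s / s₁) * ct ≤ mR + s * γ := by
            have eB : (1 - s / s₁) * (mR - η) + (s / s₁) * ct
                = mR - η + (s / s₁) * (ct - mR + η) := by ring
            rw [eB, e6]
            nlinarith [e7]
          linarith [eA, eD]
      -- end claim
    choose s₁f hs₁f Uf hUopen htUf hUbound using claim
    obtain ⟨tf, htfmem⟩ := (isCompact_univ (X := T)).elim_nhds_subcover Uf
      (fun t _ => (hUopen t).mem_nhds (htUf t))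
    have htf := htfmem.2
    have htf_ne : tf.Nonempty := by
      have h1 := htf (Set.mem_univ t₀)
      rw [Set.mem_iUnion₂] at h1
      obtain ⟨i, hi, _⟩ := h1
      exact ⟨i, hi⟩
    set sstar : ℝ := tf.inf' htf_ne s₁f with hsstardef
    have hsstar_pos : 0 < sstar := by
      rw [hsstardef, Finset.lt_inf'_iff]
      exact fun i _ => hs₁f i
    have hbound : ∀ t' : T, f t' (x + sstar • z) ≤ ((mR + sstar * γ : ℝ) : EReal) := by
      intro t'
      have h1 := htf (Set.mem_univ t')
      rw [Set.mem_iUnion₂] at h1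
      obtain ⟨i, hi, hti⟩ := h1
      exact hUbound i t' hti sstar hsstar_pos (Finset.inf'_le _ hi)
    have hFs : (⨆ t', f t' (x + sstar • z)) ≤ ((mR + sstar * γ : ℝ) : EReal) :=
      iSup_le hbound
    obtain ⟨h0ε, hFxt, hFxb, hineq⟩ := hp
    have hineq' := hineq (x + sstar • z)
    dsimp only at hineq'
    rw [hFx] at hineq'
    have hpx : p (x + sstar • z) = p x + sstar * p z := by
      rw [map_add, map_smul]
      rfl
    have hchain : ((mR + (p (x + sstar • z) - p x - 0) : ℝ) : EReal)
        ≤ ((mR + sstar * γ : ℝ) : EReal) := by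
      rw [EReal.coe_add]
      exact le_trans hineq' hFs
    rw [EReal.coe_le_coe_iff, hpx] at hchain
    have : p z ≤ γ := by
      have h2 : sstar * p z ≤ sstar * γ := by linarith
      exact le_of_mul_le_mul_left (by linarith [h2]) hsstar_pos
    linarith
  · -- easy inclusion : ⋂ … ⊆ ∂f(x)
    intro p hp
    simp only [Set.mem_iInter] at hp
    refine ⟨le_refl 0, hFx_top, hFx_ne_bot, ?_⟩
    intro y
    dsimp only
    by_cases hFy : (⨆ t, f t y) = ⊤
    · rw [hFy]; exact le_top
    have hFyb : (⨆ t, f t y) ≠ ⊥ := by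
      intro hb
      have := hmin' y
      rw [hb, le_bot_iff] at this
      exact EReal.coe_ne_bot _ this
    obtain ⟨fy, hfy⟩ := ereal_real hFy hFyb
    have hfy_ge : mR ≤ fy := by
      have := hmin' y
      rw [hfy, EReal.coe_le_coe_iff] at this
      exact this
    rw [hFx, hfy]
    have hgoal : ∀ δ : ℝ, 0 < δ → p y - p x ≤ fy - mR + δ := by
      intro δ hδ
      set Mc : ℝ := max 1 (mR + |mR| - μ + 1) with hMcdef
      have hMc1 : (1:ℝ) ≤ Mc := le_max_left _ _
      have hMcpos : (0:ℝ) < Mc := lt_of_lt_of_le one_pos hMc1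
      set ε : ℝ := min 1 (min δ (δ / Mc)) with hεdef
      have hεpos : 0 < ε := by
        rw [hεdef]
        exact lt_min one_pos (lt_min hδ (div_pos hδ hMcpos))
      have hε1 : ε ≤ 1 := min_le_left _ _
      have hεδ : ε ≤ δ := le_trans (min_le_right _ _) (min_le_left _ _)
      have hεM : ε ≤ δ / Mc := le_trans (min_le_right _ _) (min_le_right _ _)
      have hpC := hp ε hεpos
      set Sy : Set (WeakDual ℝ X) := {q | q y - q x ≤ fy - mR + δ} with hSydef
      have hSyclosed : IsClosed Sy := by
        have hcont : Continuous fun q : WeakDual ℝ X => q y - q x :=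
          (WeakDual.eval_continuous y).sub (WeakDual.eval_continuous x)
        exact IsClosed.preimage hcont isClosed_Iic
      have hSyconv : Convex ℝ Sy := by
        intro q₁ h₁ q₂ h₂ a b ha hb hab
        show (a • q₁ + b • q₂) y - (a • q₁ + b • q₂) x ≤ fy - mR + δ
        have he : (a • q₁ + b • q₂) y - (a • q₁ + b • q₂) x
            = a * (q₁ y - q₁ x) + b * (q₂ y - q₂ x) := by
          show (a * q₁ y + b * q₂ y) - (a * q₁ x + b * q₂ x) = _
          ring
        rw [he]
        have e1 : a * (q₁ y - q₁ x) ≤ a * (fy - mR + δ) := mul_le_mul_of_nonneg_left h₁ ha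
        have e2 : b * (q₂ y - q₂ x) ≤ b * (fy - mR + δ) := mul_le_mul_of_nonneg_left h₂ hb
        nlinarith [hab]
      have hsub : ((⋃ t ∈ {t : T | (⨆ s, f s x) ≤ f t x}, esubdiff (f t) x ε) ∪
          (⋃ t ∈ {t : T | (⨆ s, f s x) ≤ f t x}ᶜ, ε • esubdiff (sMul (ρ t) (f t)) x ε))
          ⊆ Sy := by
        rintro q (hq | hq)
        · rw [Set.mem_iUnion₂] at hq
          obtain ⟨t, ht, hq⟩ := hq
          have hftx : f t x = (mR : EReal) := le_antisymm (hftx_le t) (hFx ▸ ht)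
          have h1 := hq.2.2.2 y
          rw [hftx] at h1
          have h2 : ((mR + (q y - q x - ε) : ℝ) : EReal) ≤ ((fy : ℝ) : EReal) := by
            rw [EReal.coe_add]
            exact le_trans h1 (hfy ▸ hft_le_F t y)
          rw [EReal.coe_le_coe_iff] at h2
          show q y - q x ≤ fy - mR + δ
          linarith
        · rw [Set.mem_iUnion₂] at hq
          obtain ⟨t, ht, hq⟩ := hq
          obtain ⟨q', hq', rfl⟩ := hq
          have hfty_ne : f t y ≠ ⊤ := by
            intro hcon
            apply hFy
            exact top_le_iff.1 (hcon ▸ hft_le_F t y)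
          obtain ⟨ry, hry, hryle⟩ := ereal_real_of_le
            (le_trans (hft_le_F t y) (le_of_eq hfy)) (hft_ne_bot t y)
          have h1 := hq'.2.2.2 y
          rw [sMul_apply_real (hrt t), sMul_apply_real hry] at h1
          have h2 : ((ρ t * rt t + (q' y - q' x - ε) : ℝ) : EReal)
              ≤ ((ρ t * ry : ℝ) : EReal) := by
            rw [EReal.coe_add]; exact h1
          rw [EReal.coe_le_coe_iff] at h2
          show (ε • q') y - (ε • q') x ≤ fy - mR + δ
          have happ : (ε • q') y - (ε • q') x = ε * (q' y - q' x) := by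
            show ε * q' y - ε * q' x = _
            ring
          rw [happ]
          -- bounds
          have hb1 : ρ t * ry ≤ fy + |mR| := by
            rcases le_or_gt ry 0 with hry0 | hry0
            · have : ρ t * ry ≤ 0 := mul_nonpos_of_nonneg_of_nonpos (hρ t).1.le hry0
              have : (0:ℝ) ≤ fy + |mR| := by
                have := abs_nonneg mR
                have := neg_abs_le mR
                linarith [hfy_ge]
              linarith
            · have h3 : ρ t * ry ≤ 1 * ry := by
                apply mul_le_mul_of_nonneg_right (hρ t).2 hry0.le
              linarith [abs_nonneg mR, hryle]
          have hb2 := hμle t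
          have hq'bound : q' y - q' x ≤ fy + |mR| - μ + ε := by linarith
          have hmul : ε * (q' y - q' x) ≤ ε * (fy + |mR| - μ + ε) :=
            mul_le_mul_of_nonneg_left hq'bound hεpos.le
          -- final arithmetic
          have hfin : ε * (fy + |mR| - μ + ε) ≤ fy - mR + δ := by
            have k1 : (1 - ε) * mR ≤ (1 - ε) * fy :=
              mul_le_mul_of_nonneg_left hfy_ge (by linarith)
            have k2 : ε * (mR + |mR| - μ + ε) ≤ ε * (mR + |mR| - μ + 1) := by
              apply mul_le_mul_of_nonneg_left _ hεpos.le
              linarith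
            have k3 : ε * (mR + |mR| - μ + 1) ≤ ε * Mc := by
              apply mul_le_mul_of_nonneg_left (le_max_right _ _) hεpos.le
            have k4 : ε * Mc ≤ (δ / Mc) * Mc :=
              mul_le_mul_of_nonneg_right hεM hMcpos.le
            have k5 : (δ / Mc) * Mc = δ := div_mul_cancel₀ _ (ne_of_gt hMcpos)
            nlinarith [k1, k2, k3, k4, k5]
          linarith
      have hmem : p ∈ Sy :=
        closure_minimal (convexHull_min hsub hSyconv) hSyclosed hpC
      exact hmem
    have hfinal : p y - p x ≤ fy - mR := by
      apply le_of_forall_pos_le_add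
      intro δ hδ
      linarith [hgoal δ hδ]
    rw [show ((mR : ℝ) : EReal) + ((p y - p x - 0 : ℝ) : EReal)
        = ((mR + (p y - p x - 0) : ℝ) : EReal) from by rw [EReal.coe_add]]
    rw [EReal.coe_le_coe_iff]
    linarith
end
end

section
/- Let {f_t : t ∈ T} ⊂ Γ₀(X) be a nonempty family, f := sup_{t∈T} f_t, and x ∈ dom f. Assume the standard hypothesis (SH) holds and that every index is active at x, i.e. T(x) = T. Then ∂f(x) = ⋂_{ε>0} co‾( ⋃_{t∈T} ∂_ε f_t(x) ). -/
open Set Pointwise Topology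
open scoped Classical

noncomputable section
set_option maxHeartbeats 1000000

variable {X : Type*} [AddCommGroup X] [Module ℝ X] [TopologicalSpace X]
  [IsTopologicalAddGroup X] [ContinuousSMul ℝ X] [LocallyConvexSpace ℝ X] [T2Space X]

lemma wd_smul_apply (c : ℝ) (p : WeakDual ℝ X) (y : X) : (c • p) y = c * p y := rfl
lemma wd_add_apply (p q : WeakDual ℝ X) (y : X) : (p + q) y = p y + q y := rfl

lemma weakDual_rep (Φ : WeakDual ℝ X →L[ℝ] ℝ) : ∃ z : X, ∀ q : WeakDual ℝ X, Φ q = q z := by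
  have hmem : Φ ⁻¹' (Set.Ioo (-1 : ℝ) 1) ∈ 𝓝 (0 : WeakDual ℝ X) :=
    (Φ.continuous.isOpen_preimage _ isOpen_Ioo).mem_nhds (by simp)
  obtain ⟨U, hU, hUsub⟩ := (LinearMap.hasBasis_weakBilin (topDualPairing ℝ X)).mem_iff.1 hmem
  obtain ⟨I, ρ, hρ, rfl⟩ := (SeminormFamily.basisSets_iff _).1 hU
  -- any q vanishing on I is in the kernel of Φ
  have hker : ∀ q : WeakDual ℝ X, (∀ y ∈ I, q y = 0) → Φ q = 0 := by
    intro q hq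
    by_contra hΦ
    have hball : ∀ c : ℝ, (c • q) ∈ Seminorm.ball (I.sup ((topDualPairing ℝ X).toSeminormFamily)) 0 ρ := by
      intro c
      refine (Seminorm.mem_ball_zero _).2 ?_
      refine Seminorm.finset_sup_apply_lt hρ (fun y hy => ?_)
      show ‖(c • q) y‖ < ρ
      rw [wd_smul_apply, hq y hy, mul_zero, norm_zero]; exact hρ
    have habs : ∀ c : ℝ, |Φ (c • q)| < 1 := by
      intro c
      have := hUsub (hball c)
      change Φ (c • q) ∈ Set.Ioo (-1 : ℝ) 1 at this
      rw [abs_lt]; exact this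
    have h2 := habs (2 / Φ q)
    rw [map_smul, smul_eq_mul, div_mul_cancel₀ _ hΦ] at h2
    norm_num at h2
  -- linear algebra
  classical
  let L : {y // y ∈ I} → (WeakDual ℝ X →ₗ[ℝ] ℝ) := fun y =>
    { toFun := fun q => q y.1, map_add' := fun p q => rfl, map_smul' := fun c q => rfl }
  have hspan : (Φ : WeakDual ℝ X →ₗ[ℝ] ℝ) ∈ Submodule.span ℝ (Set.range L) := by
    apply mem_span_of_iInf_ker_le_ker
    intro q hq
    simp only [Submodule.mem_iInf, LinearMap.mem_ker] at hq ⊢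
    exact hker q (fun y hy => hq ⟨y, hy⟩)
  obtain ⟨c, hc⟩ := (Finsupp.mem_span_range_iff_exists_finsupp).1 hspan
  refine ⟨c.sum fun i r => r • (i.1 : X), fun q => ?_⟩
  have h1 : Φ q = c.sum fun i a => a * q i.1 := by
    have h := congrArg (fun ψ : WeakDual ℝ X →ₗ[ℝ] ℝ => ψ q) hc
    simp only [Finsupp.sum, LinearMap.coe_sum, Finset.sum_apply, LinearMap.smul_apply,
      smul_eq_mul, ContinuousLinearMap.coe_coe, L, LinearMap.coe_mk, AddHom.coe_mk] at h
    rw [Finsupp.sum]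
    exact h.symm
  have h2 : q (c.sum fun i r => r • (i.1 : X)) = c.sum fun i a => a * q i.1 := by
    rw [Finsupp.sum, Finsupp.sum, map_sum q]
    refine Finset.sum_congr rfl (fun i _ => ?_)
    rw [map_smul, smul_eq_mul]
  rw [h1, h2]

lemma epi_closed (g : X → EReal) (hg : LowerSemicontinuous g) :
    IsClosed {p : X × ℝ | g p.1 ≤ (p.2 : EReal)} := by
  have h1 : IsClosed {p : X × EReal | g p.1 ≤ p.2} :=
    lowerSemicontinuous_iff_isClosed_epigraph.1 hg
  have h2 : Continuous fun p : X × ℝ => ((p.1, (p.2 : EReal)) : X × EReal) :=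
    continuous_fst.prodMk (continuous_coe_real_ereal.comp continuous_snd)
  exact h1.preimage h2

lemma epi_convex (g : X → EReal) (hconv : EConvexOn' g) (hbot : ∀ v, g v ≠ ⊥) :
    Convex ℝ {p : X × ℝ | g p.1 ≤ (p.2 : EReal)} := by
  rintro ⟨v₁, μ₁⟩ h₁ ⟨v₂, μ₂⟩ h₂ a b ha hb hab
  simp only [Set.mem_setOf_eq] at h₁ h₂ ⊢
  have hne₁ : g v₁ ≠ ⊤ := ne_top_of_le_ne_top (EReal.coe_ne_top μ₁) h₁
  have hne₂ : g v₂ ≠ ⊤ := ne_top_of_le_ne_top (EReal.coe_ne_top μ₂) h₂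
  set m₁ := (g v₁).toReal with hm₁def
  set m₂ := (g v₂).toReal with hm₂def
  have hg₁ : g v₁ = (m₁ : EReal) := (EReal.coe_toReal hne₁ (hbot v₁)).symm
  have hg₂ : g v₂ = (m₂ : EReal) := (EReal.coe_toReal hne₂ (hbot v₂)).symm
  have hm₁ : m₁ ≤ μ₁ := by rw [hg₁] at h₁; exact_mod_cast h₁
  have hm₂ : m₂ ≤ μ₂ := by rw [hg₂] at h₂; exact_mod_cast h₂
  have := hconv v₁ v₂ a b ha hb hab
  rw [hg₁, hg₂, ← EReal.coe_mul, ← EReal.coe_mul, ← EReal.coe_add] at this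
  refine le_trans this ?_
  show ((a * m₁ + b * m₂ : ℝ) : EReal) ≤ ((a • (v₁, μ₁) + b • (v₂, μ₂) : X × ℝ).2 : EReal)
  have h2nd : (a • (v₁, μ₁) + b • (v₂, μ₂) : X × ℝ).2 = a * μ₁ + b * μ₂ := rfl
  rw [h2nd]
  exact_mod_cast add_le_add (mul_le_mul_of_nonneg_left hm₁ ha) (mul_le_mul_of_nonneg_left hm₂ hb)

lemma key_lemma_s18 (g : X → EReal) (hg : Gamma0 g) (x z : X) (r ε u γ : ℝ)
    (hε : 0 < ε) (hγ : 0 < γ) (hgx : g x = (r : EReal))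
    (hsep : ∀ q ∈ esubdiff g x ε, q z < u) :
    ∃ s : ℝ, 0 < s ∧ g (x + s • z) < ((r + s * (u + γ) : ℝ) : EReal) := by
  obtain ⟨hbot, -, hconv, hlsc⟩ := hg
  by_contra hcon
  push_neg at hcon
  -- hcon : ∀ s, 0 < s → ((r + s*(u+γ) : ℝ) : EReal) ≤ g (x + s • z)
  set u'' : ℝ := u + γ / 2 with hu''
  set s₀ : ℝ := max (2 * ε / γ) 1 with hs₀def
  have hs₀ : (0:ℝ) < s₀ := lt_of_lt_of_le one_pos (le_max_right _ _)
  have hεs₀ : ε / s₀ ≤ γ / 2 := by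
    have h2 : 2 * ε / γ ≤ s₀ := le_max_left _ _
    rw [div_le_iff₀ hγ] at h2
    rw [div_le_div_iff₀ hs₀ two_pos]
    linarith
  clear_value u'' s₀
  set Epi : Set (X × ℝ) := {p | g p.1 ≤ (p.2 : EReal)} with hEpi
  have hEclosed : IsClosed Epi := epi_closed g hlsc
  have hEconv : Convex ℝ Epi := epi_convex g hconv hbot
  have hP₀ : True := trivial
  let P₀ : X × ℝ := (x, r - ε)
  let P₁ : X × ℝ := (x + s₀ • z, r - ε + s₀ * u'')
  set K : Set (X × ℝ) := segment ℝ P₀ P₁ with hK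
  have hKconv : Convex ℝ K := convex_segment _ _
  have hKcomp : IsCompact K := by
    rw [hK, segment_eq_image]
    exact (isCompact_Icc).image <| by continuity
  have hdisj : Disjoint K Epi := by
    rw [Set.disjoint_left]
    intro w hw
    rw [hK, segment_eq_image] at hw
    obtain ⟨θ, hθ, rfl⟩ := hw
    obtain ⟨hθ0, hθ1⟩ := hθ
    have hfst : ((1 - θ) • P₀ + θ • P₁).1 = x + (θ * s₀) • z := by
      rw [Prod.fst_add, Prod.smul_fst, Prod.smul_fst]
      rw [smul_add, ← add_assoc, ← add_smul, sub_add_cancel, one_smul, smul_smul]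
    have hsnd : ((1 - θ) • P₀ + θ • P₁).2 = r - ε + (θ * s₀) * u'' := by
      rw [Prod.snd_add, Prod.smul_snd, Prod.smul_snd]
      show (1 - θ) * (r - ε) + θ * (r - ε + s₀ * u'') = r - ε + (θ * s₀) * u''
      ring
    intro hmem
    rw [hEpi, Set.mem_setOf_eq, hfst, hsnd] at hmem
    rcases eq_or_lt_of_le (mul_nonneg hθ0 hs₀.le) with h0 | hpos
    · rw [← h0, zero_smul, add_zero, hgx, zero_mul, add_zero] at hmem
      have : r ≤ r - ε := by exact_mod_cast hmem
      linarith
    · have hge := hcon (θ * s₀) hpos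
      have : ((r + (θ * s₀) * (u + γ) : ℝ) : EReal) ≤ ((r - ε + (θ * s₀) * u'' : ℝ) : EReal) :=
        le_trans hge hmem
      have h' : r + (θ * s₀) * (u + γ) ≤ r - ε + (θ * s₀) * u'' := by exact_mod_cast this
      have hh : (0:ℝ) < (θ * s₀) * (γ / 2) := mul_pos hpos (half_pos hγ)
      have hexp : (θ * s₀) * (u + γ) = (θ * s₀) * u'' + (θ * s₀) * (γ / 2) := by
        rw [hu'']; ring
      linarith
  obtain ⟨Φ, u₁, u₂, hKlt, hu₁₂, hElt⟩ :=
    geometric_hahn_banach_compact_closed hKconv hKcomp hEconv hEclosed hdisj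
  set q₀ : X →L[ℝ] ℝ := Φ.comp (ContinuousLinearMap.inl ℝ X ℝ) with hq₀
  set a : ℝ := Φ ((0 : X), (1 : ℝ)) with ha
  have hdec : ∀ (v : X) (μ : ℝ), Φ (v, μ) = q₀ v + μ * a := by
    intro v μ
    have hvμ : (v, μ) = ((v, (0:ℝ)) : X × ℝ) + μ • (((0:X), (1:ℝ)) : X × ℝ) := by
      simp [Prod.ext_iff]
    rw [hvμ, map_add, map_smul, smul_eq_mul]
    rfl
  have hanneg : 0 ≤ a := by
    by_contra han
    push_neg at han
    set M : ℝ := max r ((u₂ - q₀ x - 1) / a) with hM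
    have hxM : ((x, M) : X × ℝ) ∈ Epi := by
      rw [hEpi, Set.mem_setOf_eq, hgx]
      exact_mod_cast le_max_left _ _
    have h1 := hElt _ hxM
    rw [hdec] at h1
    have h2 : (u₂ - q₀ x - 1) / a ≤ M := le_max_right _ _
    rw [div_le_iff_of_neg han] at h2
    linarith
  have hane : a ≠ 0 := by
    intro h0
    have h1 := hKlt P₀ (left_mem_segment ℝ P₀ P₁)
    have h2 : ((x, r) : X × ℝ) ∈ Epi := by
      rw [hEpi, Set.mem_setOf_eq, hgx]
    have h3 := hElt _ h2
    rw [hdec] at h1 h3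
    rw [h0] at h1 h3
    simp at h1 h3
    linarith
  have hapos : 0 < a := lt_of_le_of_ne hanneg (Ne.symm hane)
  set q' : X →L[ℝ] ℝ := (-(a⁻¹)) • q₀ with hq'
  have hq'app : ∀ y : X, q' y = -(q₀ y) / a := by
    intro y
    rw [hq', ContinuousLinearMap.smul_apply, smul_eq_mul]
    field_simp
  set c : ℝ := u₂ / a with hc
  clear_value c
  have hlow : ∀ y : X, ((c + q' y : ℝ) : EReal) ≤ g y := by
    intro y
    rcases eq_or_ne (g y) ⊤ with htop | htop
    · rw [htop]; exact le_top
    have hgy : g y = ((g y).toReal : EReal) := (EReal.coe_toReal htop (hbot y)).symm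
    set m := (g y).toReal
    have hym : ((y, m) : X × ℝ) ∈ Epi := by rw [hEpi, Set.mem_setOf_eq]; exact le_of_eq hgy
    have h1 := hElt _ hym
    rw [hdec] at h1
    rw [hgy]
    have : c + q' y ≤ m := by
      rw [hc, hq'app]
      rw [← add_div, div_le_iff₀ hapos]
      linarith
    exact_mod_cast this
  have hxlow : c + q' x ≤ r := by
    have := hlow x
    rw [hgx] at this
    exact_mod_cast this
  have hleft : r - ε < c + q' x := by
    have h1 := hKlt P₀ (left_mem_segment ℝ P₀ P₁)
    rw [hdec] at h1
    have h2 : (r - ε) * a < u₂ - q₀ x := by linarith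
    rw [hc, hq'app, ← add_div, lt_div_iff₀ hapos]
    linarith
  have hright : r - ε + s₀ * u'' < c + q' x + s₀ * q' z := by
    have h1 := hKlt P₁ (right_mem_segment ℝ P₀ P₁)
    rw [hdec] at h1
    have hq'add : q' (x + s₀ • z) = q' x + s₀ * q' z := by
      rw [map_add, map_smul, smul_eq_mul]
    have h2 : (r - ε + s₀ * u'') * a < u₂ - q₀ (x + s₀ • z) := by linarith
    have h3 : r - ε + s₀ * u'' < c + q' (x + s₀ • z) := by
      rw [hc, hq'app, ← add_div, lt_div_iff₀ hapos]
      linarith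
    rw [hq'add] at h3
    linarith
  have hqmem : (q' : WeakDual ℝ X) ∈ esubdiff g x ε := by
    refine ⟨hε.le, by rw [hgx]; exact EReal.coe_ne_top r, by rw [hgx]; exact EReal.coe_ne_bot r,
      fun y => ?_⟩
    rw [hgx]
    have hco : ((r : ℝ) : EReal) + (((q' : WeakDual ℝ X) y - (q' : WeakDual ℝ X) x - ε : ℝ) : EReal)
        = ((r + (q' y - q' x - ε) : ℝ) : EReal) := by
      rw [← EReal.coe_add]
    refine le_trans (le_of_eq hco) ?_
    refine le_trans ?_ (hlow y)
    have : r + (q' y - q' x - ε) ≤ c + q' y := by linarith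
    exact_mod_cast this
  have hqz : q' z < u := hsep _ hqmem
  have h1 : s₀ * u'' - ε < s₀ * q' z := by linarith
  have hε' : ε ≤ γ / 2 * s₀ := (div_le_iff₀ hs₀).1 hεs₀
  have hexp2 : s₀ * u'' - γ / 2 * s₀ = s₀ * u := by rw [hu'']; ring
  have h4 : s₀ * u < s₀ * q' z := by linarith
  have h5 : u < q' z := (mul_lt_mul_iff_right₀ hs₀).1 h4
  linarith

/-- under (SH), if every index is active at `x` (`T(x) = T`), then
`∂f(x) = ⋂_{ε>0} co‾(⋃_{t∈T} ∂_ε f_t(x))`. -/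
theorem statement18 {T : Type*} [TopologicalSpace T] [CompactSpace T] [T2Space T] [Nonempty T]
    (f : T → X → EReal) (hf : ∀ t, Gamma0 (f t))
    (husc : ∀ z : X, UpperSemicontinuous fun t => f t z)
    (x : X) (hx : x ∈ edom (fun z => ⨆ t, f t z))
    (hact : ∀ t, (⨆ s, f s x) ≤ f t x) :
    esubdiff (fun z => ⨆ t, f t z) x 0 =
      ⋂ (ε : ℝ) (_ : 0 < ε), cclo (⋃ t, esubdiff (f t) x ε) := by
  have hFtop : (⨆ t, f t x) ≠ ⊤ := hx
  have hFbot : ∀ y : X, (⨆ t, f t y) ≠ ⊥ := by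
    intro y h
    have h1 : f (Classical.arbitrary T) y ≤ ⨆ t, f t y := le_iSup (fun t => f t y) _
    rw [h] at h1
    exact (hf _).1 y (le_bot_iff.1 h1)
  set r : ℝ := (⨆ t, f t x).toReal with hrdef
  have hr : (⨆ t, f t x) = (r : EReal) := (EReal.coe_toReal hFtop (hFbot x)).symm
  have hfx : ∀ t, f t x = (r : EReal) := fun t =>
    le_antisymm (hr ▸ le_iSup (fun t => f t x) t) (hr ▸ hact t)
  clear_value r
  have hsubF : ∀ ε : ℝ, 0 ≤ ε → ∀ t, esubdiff (f t) x ε ⊆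
      esubdiff (fun z => ⨆ t, f t z) x ε := by
    intro ε hε t q hq
    refine ⟨hε, hFtop, hFbot x, fun y => ?_⟩
    have h4 := hq.2.2.2 y
    rw [hfx t] at h4
    show (⨆ t, f t x) + ((q y - q x - ε : ℝ) : EReal) ≤ ⨆ t, f t y
    rw [hr]
    exact le_trans h4 (le_iSup (fun t => f t y) t)
  have hclosedF : ∀ ε : ℝ, 0 ≤ ε → IsClosed (esubdiff (fun z => ⨆ t, f t z) x ε) := by
    intro ε hε
    have hset : esubdiff (fun z => ⨆ t, f t z) x ε =
        ⋂ y : X, {p : WeakDual ℝ X |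
          (⨆ t, f t x) + ((p y - p x - ε : ℝ) : EReal) ≤ ⨆ t, f t y} := by
      ext p
      simp only [esubdiff, Set.mem_setOf_eq, Set.mem_iInter]
      exact ⟨fun h => h.2.2.2, fun h => ⟨hε, hFtop, hFbot x, h⟩⟩
    rw [hset]
    refine isClosed_iInter (fun y => ?_)
    rcases eq_or_ne (⨆ t, f t y) ⊤ with hy | hy
    · have huniv : {p : WeakDual ℝ X |
          (⨆ t, f t x) + ((p y - p x - ε : ℝ) : EReal) ≤ ⨆ t, f t y} = Set.univ := by
        ext p; simp [hy]
      rw [huniv]; exact isClosed_univ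
    · have hcy : (⨆ t, f t y) = (((⨆ t, f t y).toReal : ℝ) : EReal) :=
        (EReal.coe_toReal hy (hFbot y)).symm
      set cy := (⨆ t, f t y).toReal with hcydef
      clear_value cy
      have hpre : {p : WeakDual ℝ X |
          (⨆ t, f t x) + ((p y - p x - ε : ℝ) : EReal) ≤ ⨆ t, f t y}
          = (fun p : WeakDual ℝ X => p y - p x) ⁻¹' Set.Iic (cy - r + ε) := by
        ext p
        simp only [Set.mem_setOf_eq, Set.mem_preimage, Set.mem_Iic]
        rw [hr, hcy, ← EReal.coe_add, EReal.coe_le_coe_iff]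
        constructor <;> intro h <;> linarith
      rw [hpre]
      exact IsClosed.preimage
        ((WeakDual.eval_continuous y).sub (WeakDual.eval_continuous x)) isClosed_Iic
  have hconvF : ∀ ε : ℝ, 0 ≤ ε → Convex ℝ (esubdiff (fun z => ⨆ t, f t z) x ε) := by
    intro ε hε p₁ h₁ p₂ h₂ a b ha hb hab
    refine ⟨hε, hFtop, hFbot x, fun y => ?_⟩
    have hap : (a • p₁ + b • p₂ : WeakDual ℝ X) y = a * p₁ y + b * p₂ y := rfl
    have hax : (a • p₁ + b • p₂ : WeakDual ℝ X) x = a * p₁ x + b * p₂ x := rfl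
    show (⨆ t, f t x) + (((a • p₁ + b • p₂ : WeakDual ℝ X) y
        - (a • p₁ + b • p₂ : WeakDual ℝ X) x - ε : ℝ) : EReal) ≤ ⨆ t, f t y
    rcases eq_or_ne (⨆ t, f t y) ⊤ with hy | hy
    · rw [hy]; exact le_top
    · have hcy : (⨆ t, f t y) = (((⨆ t, f t y).toReal : ℝ) : EReal) :=
        (EReal.coe_toReal hy (hFbot y)).symm
      set cy := (⨆ t, f t y).toReal with hcydef
      clear_value cy
      have h₁' := h₁.2.2.2 y
      have h₂' := h₂.2.2.2 y
      beta_reduce at h₁' h₂'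
      rw [hr, hcy, ← EReal.coe_add, EReal.coe_le_coe_iff] at h₁' h₂'
      rw [hr, hcy, ← EReal.coe_add, EReal.coe_le_coe_iff, hap, hax]
      have e1 : a * r + b * r = r := by rw [← add_mul, hab, one_mul]
      have e2 : a * cy + b * cy = cy := by rw [← add_mul, hab, one_mul]
      have e3 : a * ε + b * ε = ε := by rw [← add_mul, hab, one_mul]
      have s1 := mul_le_mul_of_nonneg_left h₁' ha
      have s2 := mul_le_mul_of_nonneg_left h₂' hb
      nlinarith [s1, s2, e1, e2, e3]
  have hccloF : ∀ ε : ℝ, 0 < ε → cclo (⋃ t, esubdiff (f t) x ε) ⊆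
      esubdiff (fun z => ⨆ t, f t z) x ε := by
    intro ε hε
    apply closure_minimal _ (hclosedF ε hε.le)
    apply convexHull_min _ (hconvF ε hε.le)
    exact Set.iUnion_subset (fun t => hsubF ε hε.le t)
  have heasy : (⋂ (ε : ℝ) (_ : 0 < ε), cclo (⋃ t, esubdiff (f t) x ε)) ⊆
      esubdiff (fun z => ⨆ t, f t z) x 0 := by
    intro p hp
    simp only [Set.mem_iInter] at hp
    refine ⟨le_refl 0, hFtop, hFbot x, fun y => ?_⟩
    show (⨆ t, f t x) + ((p y - p x - 0 : ℝ) : EReal) ≤ ⨆ t, f t y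
    rcases eq_or_ne (⨆ t, f t y) ⊤ with hy | hy
    · rw [hy]; exact le_top
    have hcy : (⨆ t, f t y) = (((⨆ t, f t y).toReal : ℝ) : EReal) :=
      (EReal.coe_toReal hy (hFbot y)).symm
    set cy := (⨆ t, f t y).toReal with hcydef
    clear_value cy
    have hle : ∀ ε : ℝ, 0 < ε → r + (p y - p x - ε) ≤ cy := by
      intro ε hε
      have hmem := hccloF ε hε (hp ε hε)
      have h4 := hmem.2.2.2 y
      beta_reduce at h4
      rw [hr, hcy, ← EReal.coe_add, EReal.coe_le_coe_iff] at h4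
      exact h4
    have hfin : r + (p y - p x - 0) ≤ cy := by
      by_contra hcon
      push_neg at hcon
      have := hle ((r + (p y - p x) - cy) / 2) (by linarith)
      linarith
    rw [hr, hcy, ← EReal.coe_add, EReal.coe_le_coe_iff]
    exact hfin
  have hhard : esubdiff (fun z => ⨆ t, f t z) x 0 ⊆
      ⋂ (ε : ℝ) (_ : 0 < ε), cclo (⋃ t, esubdiff (f t) x ε) := by
    intro p hp
    simp only [Set.mem_iInter]
    intro ε hε
    by_contra hpc
    have hCclosed : IsClosed (cclo (⋃ t, esubdiff (f t) x ε)) := isClosed_closure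
    have hCconv : Convex ℝ (cclo (⋃ t, esubdiff (f t) x ε)) := (convex_convexHull ℝ _).closure
    obtain ⟨Φ, u, hC, hpu⟩ := geometric_hahn_banach_closed_point hCconv hCclosed hpc
    obtain ⟨z, hz⟩ := weakDual_rep Φ
    rw [hz p] at hpu
    have hsept : ∀ t : T, ∀ q ∈ esubdiff (f t) x ε, q z < u := by
      intro t q hq
      have h1 := hC q (subset_closure (subset_convexHull ℝ _ (Set.mem_iUnion.2 ⟨t, hq⟩)))
      rwa [hz q] at h1
    set γ : ℝ := (p z - u) / 2 with hγdef
    have hγ : 0 < γ := by rw [hγdef]; linarith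
    clear_value γ
    have hkey : ∀ t : T, ∃ s : ℝ, 0 < s ∧
        f t (x + s • z) < ((r + s * (u + γ) : ℝ) : EReal) :=
      fun t => key_lemma_s18 (f t) (hf t) x z r ε u γ hε hγ (hfx t) (hsept t)
    set U : {s : ℝ // 0 < s} → Set T :=
      fun s => (fun t => f t (x + s.1 • z)) ⁻¹' Set.Iio ((r + s.1 * (u + γ) : ℝ) : EReal)
      with hUdef
    have hUopen : ∀ s, IsOpen (U s) :=
      fun s => (husc (x + s.1 • z)).isOpen_preimage _
    have hUcover : Set.univ ⊆ ⋃ s, U s := by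
      intro t _
      obtain ⟨s, hs, hlt⟩ := hkey t
      exact Set.mem_iUnion.2 ⟨⟨s, hs⟩, hlt⟩
    obtain ⟨fs, hfs⟩ := isCompact_univ.elim_finite_subcover U hUopen hUcover
    have hfsne : fs.Nonempty := by
      obtain ⟨i, hi, -⟩ := Set.mem_iUnion₂.1 (hfs (Set.mem_univ (Classical.arbitrary T)))
      exact ⟨i, hi⟩
    set s₀ : ℝ := fs.inf' hfsne (fun i => i.1) with hs₀def
    have hs₀pos : 0 < s₀ := (Finset.lt_inf'_iff hfsne).2 (fun i _ => i.2)
    have hbound : ∀ t, f t (x + s₀ • z) ≤ ((r + s₀ * (u + γ) : ℝ) : EReal) := by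
      intro t
      obtain ⟨i, hi, hti⟩ := Set.mem_iUnion₂.1 (hfs (Set.mem_univ t))
      have hsi : (0:ℝ) < i.1 := i.2
      have hs₀si : s₀ ≤ i.1 := Finset.inf'_le _ hi
      have hti' : f t (x + i.1 • z) < ((r + i.1 * (u + γ) : ℝ) : EReal) := hti
      have hnetop : f t (x + i.1 • z) ≠ ⊤ := hti'.ne_top
      have hmeq : f t (x + i.1 • z) = (((f t (x + i.1 • z)).toReal : ℝ) : EReal) :=
        (EReal.coe_toReal hnetop ((hf t).1 _)).symm
      set m : ℝ := (f t (x + i.1 • z)).toReal with hmdef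
      clear_value m
      have hmlt : m < r + i.1 * (u + γ) := by
        rw [hmeq] at hti'; exact_mod_cast hti'
      have hlsi : s₀ / i.1 * i.1 = s₀ := div_mul_cancel₀ _ (ne_of_gt hsi)
      have hb0 : 0 ≤ s₀ / i.1 := by positivity
      have ha0 : 0 ≤ 1 - s₀ / i.1 := by
        rw [sub_nonneg]
        exact (div_le_one hsi).2 hs₀si
      have hpoint : (1 - s₀ / i.1) • x + (s₀ / i.1) • (x + i.1 • z) = x + s₀ • z := by
        rw [smul_add, ← add_assoc, ← add_smul, sub_add_cancel, one_smul, smul_smul, hlsi]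
      have hcv := (hf t).2.2.1 x (x + i.1 • z) (1 - s₀ / i.1) (s₀ / i.1) ha0 hb0 (by ring)
      rw [hpoint, hfx t, hmeq, ← EReal.coe_mul, ← EReal.coe_mul, ← EReal.coe_add] at hcv
      refine le_trans hcv ?_
      have hbm : s₀ / i.1 * m ≤ s₀ / i.1 * (r + i.1 * (u + γ)) :=
        mul_le_mul_of_nonneg_left hmlt.le hb0
      have hexp : s₀ / i.1 * (r + i.1 * (u + γ)) = s₀ / i.1 * r + s₀ * (u + γ) := by
        rw [mul_add, ← mul_assoc, hlsi]
      have hfin : (1 - s₀ / i.1) * r + s₀ / i.1 * m ≤ r + s₀ * (u + γ) := by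
        have hx1 : (1 - s₀ / i.1) * r = r - s₀ / i.1 * r := by ring
        linarith [hbm, hexp, hx1]
      exact_mod_cast hfin
    have hFy : (⨆ t, f t (x + s₀ • z)) ≤ ((r + s₀ * (u + γ) : ℝ) : EReal) := iSup_le hbound
    have h4 := hp.2.2.2 (x + s₀ • z)
    have h4' : (⨆ t, f t x) + ((p (x + s₀ • z) - p x - 0 : ℝ) : EReal) ≤
        ⨆ t, f t (x + s₀ • z) := h4
    rw [hr] at h4'
    have h5 := le_trans h4' hFy
    have hpy : p (x + s₀ • z) = p x + s₀ * p z := by rw [map_add, map_smul, smul_eq_mul]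
    rw [hpy, ← EReal.coe_add, EReal.coe_le_coe_iff] at h5
    have h7 : s₀ * p z ≤ s₀ * (u + γ) := by linarith
    have h8 : p z ≤ u + γ := le_of_mul_le_mul_left (by linarith) hs₀pos
    rw [hγdef] at h8
    linarith
  exact Set.Subset.antisymm hhard heasy
end
end
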